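/- Let V be a finite set, E a finite multiset of edges on V (each edge an unordered pair of distinct vertices), and let f : 2^V → ℤ be a skew-supermodular function. Let x̄ be an extreme point of the polytope P = { x ∈ ℝ^E : 0 ≤ x_e ≤ 1 for all e ∈ E, and Σ_{e ∈ δ(S)} x_e ≥ f(S) for all S ⊆ V }, and suppose x̄ is fully fractional, i.e., 0 < x̄_e < 1 for all e ∈ E. Then there exists a laminar family L of nonempty proper subsets of V such that: (i) x̄(δ(S)) = f(S) for every S ∈ L; (ii) |L| = |E|; (iii) the characteristic vectors χ(δ(S)), S ∈ L, are linearly independent in ℝ^E; and (iv) x̄ is the unique solution of the linear system { x(δ(S)) = f(S) : S ∈ L }. -/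
import Mathlib


open Finset

/-- Skew-supermodularity of an integer-valued set function. -/
def SkewSupermodular {V : Type*} [DecidableEq V] (f : Finset V → ℤ) : Prop :=
  ∀ A B : Finset V,
    f A + f B ≤ f (A ∩ B) + f (A ∪ B) ∨ f A + f B ≤ f (A \ B) + f (B \ A)

/-- `δ(T)`: the indices of edges with exactly one endpoint in `T`. Edges are given as an
indexed family with endpoint maps `a b : ι → V`. -/
def cutEdges {V ι : Type*} [DecidableEq V] [Fintype ι] (a b : ι → V) (T : Finset V) :
    Finset ι :=
  Finset.univ.filter (fun i => ¬((a i ∈ T) ↔ (b i ∈ T)))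

/-- `x(δ(T)) = Σ_{e ∈ δ(T)} x_e`. -/
def xCut {V ι : Type*} [DecidableEq V] [Fintype ι] (a b : ι → V) (x : ι → ℝ)
    (T : Finset V) : ℝ :=
  ∑ i ∈ cutEdges a b T, x i

/-- `χ(δ(T)) ∈ {0,1}^E`, the characteristic vector of `δ(T)`. -/
def chiCut {V ι : Type*} [DecidableEq V] [Fintype ι] [DecidableEq ι] (a b : ι → V)
    (T : Finset V) : ι → ℝ :=
  fun i => if i ∈ cutEdges a b T then 1 else 0

section Aux
set_option linter.unusedSectionVars false
variable {V ι : Type*} [DecidableEq V] [Fintype ι] [DecidableEq ι] (a b : ι → V)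

lemma mem_cutEdges {T : Finset V} {i : ι} :
    i ∈ cutEdges a b T ↔ ¬((a i ∈ T) ↔ (b i ∈ T)) := by
  simp [cutEdges]

lemma chiCut_nonneg (T : Finset V) (i : ι) : 0 ≤ chiCut a b T i := by
  unfold chiCut; split <;> norm_num

lemma chiCut_le_one (T : Finset V) (i : ι) : chiCut a b T i ≤ 1 := by
  unfold chiCut; split <;> norm_num

lemma xCut_eq_sum (x : ι → ℝ) (T : Finset V) :
    xCut a b x T = ∑ i, x i * chiCut a b T i := by
  unfold xCut chiCut
  simp only [mul_ite, mul_one, mul_zero]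
  rw [Finset.sum_ite_mem, Finset.univ_inter]

lemma chi_uncross_inter (A B : Finset V) (i : ι) :
    chiCut a b (A ∩ B) i + chiCut a b (A ∪ B) i ≤ chiCut a b A i + chiCut a b B i := by
  unfold chiCut
  simp only [mem_cutEdges, Finset.mem_inter, Finset.mem_union]
  by_cases h1 : a i ∈ A <;> by_cases h2 : a i ∈ B <;> by_cases h3 : b i ∈ A <;>
    by_cases h4 : b i ∈ B <;> simp [h1, h2, h3, h4]

lemma chi_uncross_diff (A B : Finset V) (i : ι) :
    chiCut a b (A \ B) i + chiCut a b (B \ A) i ≤ chiCut a b A i + chiCut a b B i := by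
  unfold chiCut
  simp only [mem_cutEdges, Finset.mem_sdiff]
  by_cases h1 : a i ∈ A <;> by_cases h2 : a i ∈ B <;> by_cases h3 : b i ∈ A <;>
    by_cases h4 : b i ∈ B <;> simp [h1, h2, h3, h4]

lemma chiCut_empty : chiCut a b (∅ : Finset V) = 0 := by
  funext i; simp [chiCut, mem_cutEdges]

lemma chiCut_univ [Fintype V] : chiCut a b (Finset.univ : Finset V) = 0 := by
  funext i; simp [chiCut, mem_cutEdges]

end Aux

section Cross
variable {V : Type*} [DecidableEq V]

def Crosses (S T : Finset V) : Prop := ¬(Disjoint S T ∨ S ⊆ T ∨ T ⊆ S)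

instance (S : Finset V) : DecidablePred (Crosses S) := fun _ => by
  unfold Crosses; infer_instance

lemma crosses_symm {S T : Finset V} (h : Crosses S T) : Crosses T S := by
  intro hc
  rcases hc with h1 | h2 | h3
  · exact h (Or.inl h1.symm)
  · exact h (Or.inr (Or.inr h2))
  · exact h (Or.inr (Or.inl h3))

lemma not_crosses_disjoint {S T : Finset V} (h : Crosses S T) : ¬ Disjoint S T :=
  fun hd => h (Or.inl hd)

variable {S T T' : Finset V}
  (hrel : Disjoint T' T ∨ T' ⊆ T ∨ T ⊆ T') (hST : Crosses S T)

include hrel hST in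
lemma crosses_of_inter (hX : Crosses (S ∩ T) T') : Crosses S T' := by
  intro h
  rcases h with hd | hsub | hsup
  · exact hX (Or.inl (hd.mono_left Finset.inter_subset_left))
  · exact hX (Or.inr (Or.inl (Finset.inter_subset_left.trans hsub)))
  · rcases hrel with hd' | hs' | hs''
    · exact hX (Or.inl (hd'.symm.mono_left Finset.inter_subset_right))
    · exact hX (Or.inr (Or.inr (Finset.subset_inter hsup hs')))
    · exact hST (Or.inr (Or.inr (hs''.trans hsup)))

include hrel hST in
lemma crosses_of_union (hX : Crosses (S ∪ T) T') : Crosses S T' := by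
  intro h
  rcases h with hd | hsub | hsup
  · rcases hrel with hd' | hs' | hs''
    · exact hX (Or.inl (Finset.disjoint_union_left.mpr ⟨hd, hd'.symm⟩))
    · exact hX (Or.inr (Or.inr (hs'.trans Finset.subset_union_right)))
    · exact hST (Or.inl (hd.mono_right hs''))
  · rcases hrel with hd' | hs' | hs''
    · exact hST (Or.inl (hd'.mono_left hsub))
    · exact hST (Or.inr (Or.inl (hsub.trans hs')))
    · exact hX (Or.inr (Or.inl (Finset.union_subset hsub hs'')))
  · exact hX (Or.inr (Or.inr (hsup.trans Finset.subset_union_left)))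

include hrel hST in
lemma crosses_of_sdiff (hX : Crosses (S \ T) T') : Crosses S T' := by
  intro h
  rcases h with hd | hsub | hsup
  · exact hX (Or.inl (hd.mono_left Finset.sdiff_subset))
  · exact hX (Or.inr (Or.inl (Finset.sdiff_subset.trans hsub)))
  · rcases hrel with hd' | hs' | hs''
    · exact hX (Or.inr (Or.inr (Finset.subset_sdiff.mpr ⟨hsup, hd'⟩)))
    · exact hX (Or.inl (Finset.sdiff_disjoint.mono_right hs'))
    · exact hST (Or.inr (Or.inr (hs''.trans hsup)))

include hrel hST in
lemma crosses_of_sdiff' (hX : Crosses (T \ S) T') : Crosses S T' := by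
  intro h
  rcases h with hd | hsub | hsup
  · rcases hrel with hd' | hs' | hs''
    · exact hX (Or.inl (hd'.symm.mono_left Finset.sdiff_subset))
    · exact hX (Or.inr (Or.inr (Finset.subset_sdiff.mpr ⟨hs', hd.symm⟩)))
    · exact hST (Or.inl (hd.mono_right hs''))
  · rcases hrel with hd' | hs' | hs''
    · exact hST (Or.inl (hd'.mono_left hsub))
    · exact hST (Or.inr (Or.inl (hsub.trans hs')))
    · exact hX (Or.inr (Or.inl (Finset.sdiff_subset.trans hs'')))
  · exact hX (Or.inl (Finset.sdiff_disjoint.mono_right hsup))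

lemma not_crosses_inter : ¬ Crosses (S ∩ T) T :=
  fun h => h (Or.inr (Or.inl Finset.inter_subset_right))

lemma not_crosses_union : ¬ Crosses (S ∪ T) T :=
  fun h => h (Or.inr (Or.inr Finset.subset_union_right))

lemma not_crosses_sdiff : ¬ Crosses (S \ T) T :=
  fun h => h (Or.inl Finset.sdiff_disjoint)

lemma not_crosses_sdiff' : ¬ Crosses (T \ S) T :=
  fun h => h (Or.inr (Or.inl Finset.sdiff_subset))

lemma filter_cross_lt {ℒ : Finset (Finset V)} {S T X : Finset V} (hT : T ∈ ℒ)
    (hST : Crosses S T)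
    (hmono : ∀ T'' ∈ ℒ, Crosses X T'' → Crosses S T'') (hXT : ¬ Crosses X T) :
    (ℒ.filter (fun T'' => Crosses X T'')).card < (ℒ.filter (fun T'' => Crosses S T'')).card := by
  apply Finset.card_lt_card
  have hsub : ℒ.filter (fun T'' => Crosses X T'') ⊆ ℒ.filter (fun T'' => Crosses S T'') := by
    intro t ht
    rw [Finset.mem_filter] at *
    exact ⟨ht.1, hmono t ht.1 ht.2⟩
  rw [Finset.ssubset_iff_of_subset hsub]
  exact ⟨T, Finset.mem_filter.mpr ⟨hT, hST⟩, fun hc => hXT (Finset.mem_filter.mp hc).2⟩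

end Cross

section Main
set_option linter.unusedSectionVars false
variable {V ι : Type*} [Fintype V] [DecidableEq V] [Fintype ι] [DecidableEq ι]
  (a b : ι → V) (f : Finset V → ℤ) (x : ι → ℝ)

lemma xCut_uncross_inter (hx : ∀ i, 0 ≤ x i) (A B : Finset V) :
    xCut a b x (A ∩ B) + xCut a b x (A ∪ B) ≤ xCut a b x A + xCut a b x B := by
  simp only [xCut_eq_sum, ← Finset.sum_add_distrib]
  apply Finset.sum_le_sum
  intro i _
  have h := chi_uncross_inter a b A B i
  nlinarith [hx i]

lemma xCut_uncross_diff (hx : ∀ i, 0 ≤ x i) (A B : Finset V) :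
    xCut a b x (A \ B) + xCut a b x (B \ A) ≤ xCut a b x A + xCut a b x B := by
  simp only [xCut_eq_sum, ← Finset.sum_add_distrib]
  apply Finset.sum_le_sum
  intro i _
  have h := chi_uncross_diff a b A B i
  nlinarith [hx i]

lemma chi_eq_of_sums_eq (hx : ∀ i, 0 < x i) {A B C D : Finset V}
    (hpt : ∀ i, chiCut a b C i + chiCut a b D i ≤ chiCut a b A i + chiCut a b B i)
    (hsum : xCut a b x A + xCut a b x B ≤ xCut a b x C + xCut a b x D) :
    ∀ i, chiCut a b A i + chiCut a b B i = chiCut a b C i + chiCut a b D i := by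
  have hgnn : ∀ i ∈ Finset.univ, (0:ℝ) ≤
      x i * ((chiCut a b A i + chiCut a b B i) - (chiCut a b C i + chiCut a b D i)) := by
    intro i _
    have h1 := hpt i
    have h2 := (hx i).le
    nlinarith
  have hsum0 : ∑ i, x i * ((chiCut a b A i + chiCut a b B i)
      - (chiCut a b C i + chiCut a b D i)) = 0 := by
    have hexp : ∑ i, x i * ((chiCut a b A i + chiCut a b B i)
        - (chiCut a b C i + chiCut a b D i)) =
        (xCut a b x A + xCut a b x B) - (xCut a b x C + xCut a b x D) := by
      simp only [xCut_eq_sum]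
      rw [← Finset.sum_add_distrib, ← Finset.sum_add_distrib, ← Finset.sum_sub_distrib]
      apply Finset.sum_congr rfl
      intro i _
      ring
    have h3 := Finset.sum_nonneg hgnn
    rw [hexp] at h3 ⊢
    linarith
  intro i
  have h4 := (Finset.sum_eq_zero_iff_of_nonneg hgnn).mp hsum0 i (Finset.mem_univ i)
  have hxi := (hx i).ne'
  rcases mul_eq_zero.mp h4 with h | h
  · exact absurd h hxi
  · linarith

lemma uncross (hf : SkewSupermodular f) (hx : ∀ i, 0 < x i)
    (hfeas : ∀ S : Finset V, (f S : ℝ) ≤ xCut a b x S)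
    {A B : Finset V} (hA : xCut a b x A = f A) (hB : xCut a b x B = f B) :
    (xCut a b x (A ∩ B) = f (A ∩ B) ∧ xCut a b x (A ∪ B) = f (A ∪ B) ∧
      ∀ i, chiCut a b A i + chiCut a b B i
        = chiCut a b (A ∩ B) i + chiCut a b (A ∪ B) i) ∨
    (xCut a b x (A \ B) = f (A \ B) ∧ xCut a b x (B \ A) = f (B \ A) ∧
      ∀ i, chiCut a b A i + chiCut a b B i
        = chiCut a b (A \ B) i + chiCut a b (B \ A) i) := by
  have hxnn : ∀ i, 0 ≤ x i := fun i => (hx i).le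
  rcases hf A B with h | h
  · left
    have hfr : (f A : ℝ) + f B ≤ (f (A ∩ B) : ℝ) + f (A ∪ B) := by exact_mod_cast h
    have h1 := hfeas (A ∩ B)
    have h2 := hfeas (A ∪ B)
    have h3 := xCut_uncross_inter a b x hxnn A B
    refine ⟨by linarith, by linarith, ?_⟩
    exact chi_eq_of_sums_eq a b x hx (chi_uncross_inter a b A B) (by linarith)
  · right
    have hfr : (f A : ℝ) + f B ≤ (f (A \ B) : ℝ) + f (B \ A) := by exact_mod_cast h
    have h1 := hfeas (A \ B)
    have h2 := hfeas (B \ A)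
    have h3 := xCut_uncross_diff a b x hxnn A B
    refine ⟨by linarith, by linarith, ?_⟩
    exact chi_eq_of_sums_eq a b x hx (chi_uncross_diff a b A B) (by linarith)

end Main

section Span
set_option linter.unusedSectionVars false
set_option maxHeartbeats 1000000
variable {V ι : Type*} [Fintype V] [DecidableEq V] [Fintype ι] [DecidableEq ι]
  (a b : ι → V) (f : Finset V → ℤ) (x : ι → ℝ)

lemma span_laminar (hf : SkewSupermodular f) (hx : ∀ i, 0 < x i)
    (hfeas : ∀ S : Finset V, (f S : ℝ) ≤ xCut a b x S) :
    ∃ ℒ : Finset (Finset V),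
      (∀ S ∈ ℒ, S.Nonempty ∧ S ≠ Finset.univ ∧ xCut a b x S = f S) ∧
      (∀ S ∈ ℒ, ∀ T ∈ ℒ, Disjoint S T ∨ S ⊆ T ∨ T ⊆ S) ∧
      ∀ S : Finset V, xCut a b x S = f S →
        chiCut a b S ∈ Submodule.span ℝ (chiCut a b '' {T | T ∈ ℒ}) := by
  classical
  set good : Finset (Finset V) → Prop := fun M =>
    (∀ S ∈ M, S.Nonempty ∧ S ≠ Finset.univ ∧ xCut a b x S = f S) ∧
    (∀ S ∈ M, ∀ T ∈ M, Disjoint S T ∨ S ⊆ T ∨ T ⊆ S) with hgood_def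
  have h𝒞ne : (Finset.univ.filter good).Nonempty := by
    refine ⟨∅, Finset.mem_filter.mpr ⟨Finset.mem_univ _, ?_, ?_⟩⟩ <;> simp
  obtain ⟨ℒ, hℒmem, hmax⟩ := Finset.exists_max_image (Finset.univ.filter good)
    (fun M => Module.finrank ℝ (Submodule.span ℝ (chiCut a b '' {T | T ∈ M}))) h𝒞ne
  have hℒgood : good ℒ := (Finset.mem_filter.mp hℒmem).2
  refine ⟨ℒ, hℒgood.1, hℒgood.2, ?_⟩
  have main : ∀ n : ℕ, ∀ S : Finset V,
      (ℒ.filter (fun T => Crosses S T)).card ≤ n → xCut a b x S = f S →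
      chiCut a b S ∈ Submodule.span ℝ (chiCut a b '' {T | T ∈ ℒ}) := by
    intro n
    induction n with
    | zero =>
      intro S hc hS
      by_contra hmem
      have hS0 : S ≠ ∅ := by
        intro h; rw [h, chiCut_empty] at hmem
        exact hmem (Submodule.zero_mem _)
      have hSu : S ≠ Finset.univ := by
        intro h; rw [h, chiCut_univ] at hmem
        exact hmem (Submodule.zero_mem _)
      have hnocross : ∀ T ∈ ℒ, ¬ Crosses S T := by
        intro T hT hc'
        have : T ∈ ℒ.filter (fun T => Crosses S T) := Finset.mem_filter.mpr ⟨hT, hc'⟩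
        rw [Finset.card_eq_zero.mp (Nat.le_zero.mp hc)] at this
        exact absurd this (Finset.notMem_empty T)
      have hgood' : good (insert S ℒ) := by
        constructor
        · intro T hT
          rcases Finset.mem_insert.mp hT with h | h
          · exact h ▸ ⟨Finset.nonempty_iff_ne_empty.mpr hS0, hSu, hS⟩
          · exact hℒgood.1 T h
        · intro A hA B hB
          rcases Finset.mem_insert.mp hA with hA' | hA' <;>
            rcases Finset.mem_insert.mp hB with hB' | hB'
          · subst hA'; subst hB'; exact Or.inr (Or.inl (Finset.Subset.refl _))
          · subst hA'
            have := hnocross B hB'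
            unfold Crosses at this
            push_neg at this
            tauto
          · subst hB'
            have := hnocross A hA'
            unfold Crosses at this
            push_neg at this
            rcases this with h | h | h
            · exact Or.inl h.symm
            · exact Or.inr (Or.inr h)
            · exact Or.inr (Or.inl h)
          · exact hℒgood.2 A hA' B hB'
      have hlt : Submodule.span ℝ (chiCut a b '' {T | T ∈ ℒ}) <
          Submodule.span ℝ (chiCut a b '' {T | T ∈ insert S ℒ}) := by
        refine lt_of_le_of_ne (Submodule.span_mono (Set.image_mono ?_)) ?_
        · intro T hT; exact Finset.mem_insert_of_mem hT
        · intro h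
          apply hmem
          rw [h]
          exact Submodule.subset_span ⟨S, Finset.mem_insert_self S ℒ, rfl⟩
      have := Submodule.finrank_lt_finrank_of_lt hlt
      have hmem' := hmax (insert S ℒ)
        (Finset.mem_filter.mpr ⟨Finset.mem_univ _, hgood'⟩)
      omega
    | succ n ih =>
      intro S hc hS
      by_cases hzero : (ℒ.filter (fun T => Crosses S T)).card = 0
      · exact ih S (by omega) hS
      · obtain ⟨T, hTmem⟩ := Finset.card_pos.mp (Nat.pos_of_ne_zero hzero)
        have hT : T ∈ ℒ := (Finset.mem_filter.mp hTmem).1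
        have hST : Crosses S T := (Finset.mem_filter.mp hTmem).2
        have hTt : xCut a b x T = f T := (hℒgood.1 T hT).2.2
        have hchiT : chiCut a b T ∈ Submodule.span ℝ (chiCut a b '' {T | T ∈ ℒ}) :=
          Submodule.subset_span ⟨T, hT, rfl⟩
        have hrel : ∀ T'' ∈ ℒ, Disjoint T'' T ∨ T'' ⊆ T ∨ T ⊆ T'' :=
          fun T'' hT'' => hℒgood.2 T'' hT'' T hT
        rcases uncross a b f x hf hx hfeas hS hTt with ⟨h1, h2, heq⟩ | ⟨h1, h2, heq⟩
        · have hcI := filter_cross_lt hT hST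
            (fun T'' hT'' hXc => crosses_of_inter (hrel T'' hT'') hST hXc)
            (not_crosses_inter)
          have hcU := filter_cross_lt hT hST
            (fun T'' hT'' hXc => crosses_of_union (hrel T'' hT'') hST hXc)
            (not_crosses_union)
          have hI := ih (S ∩ T) (by omega) h1
          have hU := ih (S ∪ T) (by omega) h2
          have hrw : chiCut a b S =
              chiCut a b (S ∩ T) + chiCut a b (S ∪ T) - chiCut a b T := by
            funext i
            have := heq i
            simp only [Pi.sub_apply, Pi.add_apply]
            linarith
          rw [hrw]
          exact Submodule.sub_mem _ (Submodule.add_mem _ hI hU) hchiT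
        · have hcI := filter_cross_lt hT hST
            (fun T'' hT'' hXc => crosses_of_sdiff (hrel T'' hT'') hST hXc)
            (not_crosses_sdiff)
          have hcU := filter_cross_lt hT hST
            (fun T'' hT'' hXc => crosses_of_sdiff' (hrel T'' hT'') hST hXc)
            (not_crosses_sdiff')
          have hI := ih (S \ T) (by omega) h1
          have hU := ih (T \ S) (by omega) h2
          have hrw : chiCut a b S =
              chiCut a b (S \ T) + chiCut a b (T \ S) - chiCut a b T := by
            funext i
            have := heq i
            simp only [Pi.sub_apply, Pi.add_apply]
            linarith
          rw [hrw]
          exact Submodule.sub_mem _ (Submodule.add_mem _ hI hU) hchiT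
  exact fun S hS => main _ S le_rfl hS

end Span

section Extreme
set_option linter.unusedSectionVars false
set_option maxHeartbeats 1000000
variable {V ι : Type*} [Fintype V] [DecidableEq V] [Fintype ι] [DecidableEq ι]
  (a b : ι → V) (f : Finset V → ℤ)

lemma tight_span_top
    (P : Set (ι → ℝ))
    (hP : P = {x : ι → ℝ | (∀ i, 0 ≤ x i ∧ x i ≤ 1) ∧
      ∀ S : Finset V, (f S : ℝ) ≤ ∑ i ∈ cutEdges a b S, x i})
    (xbar : ι → ℝ) (hxbar : xbar ∈ Set.extremePoints ℝ P)
    (hfrac : ∀ i, 0 < xbar i ∧ xbar i < 1) :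
    Submodule.span ℝ (chiCut a b '' {S : Finset V | xCut a b xbar S = f S}) = ⊤ := by
  classical
  by_contra hW
  have hlt : Submodule.span ℝ (chiCut a b '' {S : Finset V | xCut a b xbar S = f S}) < ⊤ :=
    lt_top_iff_ne_top.mpr hW
  obtain ⟨φ, hφ0, hφmap⟩ := Submodule.exists_dual_map_eq_bot_of_lt_top hlt inferInstance
  have hφW : ∀ w ∈ Submodule.span ℝ
      (chiCut a b '' {S : Finset V | xCut a b xbar S = f S}), φ w = 0 := by
    intro w hw
    have : φ w ∈ Submodule.map φ (Submodule.span ℝ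
        (chiCut a b '' {S : Finset V | xCut a b xbar S = f S})) :=
      Submodule.mem_map_of_mem hw
    rw [hφmap] at this
    exact Submodule.mem_bot ℝ |>.mp this
  set d : ι → ℝ := fun i => φ (Pi.single i 1) with hd_def
  have hsingle : ∀ i : ι, (fun j => if i = j then (1:ℝ) else 0) = Pi.single i 1 := by
    intro i; funext j; simp [Pi.single_apply, eq_comm]
  have hφx : ∀ v : ι → ℝ, φ v = ∑ i, v i * d i := by
    intro v
    conv_lhs => rw [pi_eq_sum_univ v]
    rw [map_sum]
    apply Finset.sum_congr rfl
    intro i _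
    rw [hsingle i, map_smul, smul_eq_mul]
  have hd0 : d ≠ 0 := by
    intro h
    apply hφ0
    apply LinearMap.ext
    intro v
    rw [hφx v, h]
    simp
  have hc : ∀ S : Finset V, xCut a b xbar S = f S → ∑ i, chiCut a b S i * d i = 0 := by
    intro S hS
    have := hφW (chiCut a b S) (Submodule.subset_span ⟨S, hS, rfl⟩)
    rwa [hφx] at this
  have hPx : xbar ∈ P := hxbar.1
  rw [hP] at hPx
  have hfe : ∀ S : Finset V, (f S : ℝ) ≤ xCut a b xbar S := fun S => hPx.2 S
  set D : ℝ := 1 + ∑ i, |d i| with hD_def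
  have hDpos : 0 < D := by
    have : (0:ℝ) ≤ ∑ i, |d i| := Finset.sum_nonneg fun i _ => abs_nonneg _
    rw [hD_def]; linarith
  have hdile : ∀ i, |d i| ≤ D := by
    intro i
    have := Finset.single_le_sum (f := fun i => |d i|) (fun j _ => abs_nonneg _)
      (Finset.mem_univ i)
    rw [hD_def]; linarith
  have hcS : ∀ S : Finset V, |∑ i, chiCut a b S i * d i| ≤ D := by
    intro S
    calc |∑ i, chiCut a b S i * d i| ≤ ∑ i, |chiCut a b S i * d i| :=
          Finset.abs_sum_le_sum_abs _ _
      _ ≤ ∑ i, |d i| := by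
          apply Finset.sum_le_sum
          intro i _
          rw [abs_mul, abs_of_nonneg (chiCut_nonneg a b S i)]
          exact mul_le_of_le_one_left (abs_nonneg _) (chiCut_le_one a b S i)
      _ ≤ D := by rw [hD_def]; linarith
  set cand : Finset ℝ := insert 1
    ((Finset.univ.image fun i : ι => min (xbar i) (1 - xbar i) / D) ∪
     ((Finset.univ.filter fun S : Finset V => ¬(xCut a b xbar S = f S)).image
        fun S => (xCut a b xbar S - f S) / D)) with hcand_def
  have hcne : cand.Nonempty := Finset.insert_nonempty _ _
  set ε : ℝ := cand.min' hcne with hε_def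
  have hcand_pos : ∀ r ∈ cand, 0 < r := by
    intro r hr
    rw [hcand_def, Finset.mem_insert, Finset.mem_union] at hr
    rcases hr with h | h | h
    · rw [h]; norm_num
    · obtain ⟨i, _, rfl⟩ := Finset.mem_image.mp h
      exact div_pos (lt_min (hfrac i).1 (by linarith [(hfrac i).2])) hDpos
    · obtain ⟨S, hS, rfl⟩ := Finset.mem_image.mp h
      have hS' := (Finset.mem_filter.mp hS).2
      have : (f S : ℝ) < xCut a b xbar S := (hfe S).lt_of_ne (fun h => hS' h.symm)
      exact div_pos (by linarith) hDpos
  have hεpos : 0 < ε := hcand_pos _ (cand.min'_mem hcne)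
  have hε1 : ∀ i, ε * D ≤ min (xbar i) (1 - xbar i) := by
    intro i
    have hmem : min (xbar i) (1 - xbar i) / D ∈ cand := by
      rw [hcand_def]
      exact Finset.mem_insert_of_mem (Finset.mem_union_left _
        (Finset.mem_image.mpr ⟨i, Finset.mem_univ i, rfl⟩))
    have hle := Finset.min'_le cand _ hmem
    rw [← hε_def] at hle
    calc ε * D ≤ (min (xbar i) (1 - xbar i) / D) * D := by nlinarith
      _ = min (xbar i) (1 - xbar i) := div_mul_cancel₀ _ hDpos.ne'
  have hε2 : ∀ S : Finset V, ¬(xCut a b xbar S = f S) →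
      ε * D ≤ xCut a b xbar S - f S := by
    intro S hS
    have hmem : (xCut a b xbar S - f S) / D ∈ cand := by
      rw [hcand_def]
      exact Finset.mem_insert_of_mem (Finset.mem_union_right _
        (Finset.mem_image.mpr ⟨S, Finset.mem_filter.mpr ⟨Finset.mem_univ S, hS⟩, rfl⟩))
    have hle := Finset.min'_le cand _ hmem
    rw [← hε_def] at hle
    calc ε * D ≤ ((xCut a b xbar S - f S) / D) * D := by nlinarith
      _ = _ := div_mul_cancel₀ _ hDpos.ne'
  set y1 : ι → ℝ := fun i => xbar i - ε * d i with hy1_def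
  set y2 : ι → ℝ := fun i => xbar i + ε * d i with hy2_def
  have hshift2 : ∀ S : Finset V,
      xCut a b y2 S = xCut a b xbar S + ε * ∑ i, chiCut a b S i * d i := by
    intro S
    rw [xCut_eq_sum, xCut_eq_sum, Finset.mul_sum, ← Finset.sum_add_distrib]
    apply Finset.sum_congr rfl
    intro i _
    rw [hy2_def]
    ring
  have hshift1 : ∀ S : Finset V,
      xCut a b y1 S = xCut a b xbar S - ε * ∑ i, chiCut a b S i * d i := by
    intro S
    rw [xCut_eq_sum, xCut_eq_sum, Finset.mul_sum, ← Finset.sum_sub_distrib]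
    apply Finset.sum_congr rfl
    intro i _
    rw [hy1_def]
    ring
  have hbound : ∀ i, |ε * d i| ≤ min (xbar i) (1 - xbar i) := by
    intro i
    have h1 := hdile i
    have h2 := hε1 i
    rw [abs_mul, abs_of_pos hεpos]
    nlinarith
  have hcut : ∀ (y : ι → ℝ), (∀ S : Finset V, xCut a b y S = xCut a b xbar S
        + ε * ∑ i, chiCut a b S i * d i ∨ xCut a b y S = xCut a b xbar S
        - ε * ∑ i, chiCut a b S i * d i) →
      ∀ S : Finset V, (f S : ℝ) ≤ ∑ i ∈ cutEdges a b S, y i := by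
    intro y hy S
    have hgoal : (f S : ℝ) ≤ xCut a b y S := by
      by_cases hS : xCut a b xbar S = f S
      · rcases hy S with h | h <;> rw [h, hc S hS] <;> simp [hS.symm.le, hS]
      · have hsl := hε2 S hS
        have habs := hcS S
        have h3 := abs_le.mp habs
        rcases hy S with h | h <;> rw [h] <;> nlinarith
    exact hgoal
  have hy1P : y1 ∈ P := by
    rw [hP]
    refine ⟨fun i => ?_, hcut y1 (fun S => Or.inr (hshift1 S)) ⟩
    have h1 := abs_le.mp (hbound i)
    have h2 : min (xbar i) (1 - xbar i) ≤ xbar i := min_le_left _ _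
    have h3 : min (xbar i) (1 - xbar i) ≤ 1 - xbar i := min_le_right _ _
    constructor <;> rw [hy1_def] <;> dsimp only <;> nlinarith
  have hy2P : y2 ∈ P := by
    rw [hP]
    refine ⟨fun i => ?_, hcut y2 (fun S => Or.inl (hshift2 S)) ⟩
    have h1 := abs_le.mp (hbound i)
    have h2 : min (xbar i) (1 - xbar i) ≤ xbar i := min_le_left _ _
    have h3 : min (xbar i) (1 - xbar i) ≤ 1 - xbar i := min_le_right _ _
    constructor <;> rw [hy2_def] <;> dsimp only <;> nlinarith
  have hseg : xbar ∈ openSegment ℝ y1 y2 := by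
    refine ⟨1/2, 1/2, by norm_num, by norm_num, by norm_num, ?_⟩
    funext i
    simp only [Pi.add_apply, Pi.smul_apply, smul_eq_mul, hy1_def, hy2_def]
    ring
  obtain ⟨-, h2⟩ := (mem_extremePoints.mp hxbar).2 y1 hy1P y2 hy2P hseg
  apply hd0
  funext i
  have := congrFun h2 i
  rw [hy2_def] at this
  simp only at this
  have : ε * d i = 0 := by linarith [this]
  rcases mul_eq_zero.mp this with h | h
  · exact absurd h hεpos.ne'
  · exact h

end Extreme


set_option maxHeartbeats 1000000 in
/-- Characterization of fully fractional basic feasible solutions: a fully fractional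
extreme point of the covering LP is determined by a laminar family of tight sets. -/
theorem stmt13 {V ι : Type*} [Fintype V] [DecidableEq V] [Fintype ι] [DecidableEq ι]
    (a b : ι → V) (hab : ∀ i, a i ≠ b i)
    (f : Finset V → ℤ) (hf : SkewSupermodular f)
    (P : Set (ι → ℝ))
    (hP : P = {x : ι → ℝ | (∀ i, 0 ≤ x i ∧ x i ≤ 1) ∧
      ∀ S : Finset V, (f S : ℝ) ≤ ∑ i ∈ cutEdges a b S, x i})
    (xbar : ι → ℝ) (hxbar : xbar ∈ Set.extremePoints ℝ P)
    (hfrac : ∀ i, 0 < xbar i ∧ xbar i < 1) :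
    ∃ L : Finset (Finset V),
      (∀ S ∈ L, S.Nonempty ∧ S ≠ Finset.univ) ∧
      (∀ S ∈ L, ∀ T ∈ L, Disjoint S T ∨ S ⊆ T ∨ T ⊆ S) ∧
      (∀ S ∈ L, xCut a b xbar S = f S) ∧
      L.card = Fintype.card ι ∧
      LinearIndependent ℝ (fun S : {T // T ∈ L} => chiCut a b S.val) ∧
      (∀ y : ι → ℝ, (∀ S ∈ L, xCut a b y S = f S) → y = xbar) := by
  classical
  have hPx : xbar ∈ P := hxbar.1
  rw [hP] at hPx
  have hfeas : ∀ S : Finset V, (f S : ℝ) ≤ xCut a b xbar S := fun S => hPx.2 S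
  have hx : ∀ i, 0 < xbar i := fun i => (hfrac i).1
  obtain ⟨ℒ, hℒ1, hℒ2, hℒspan⟩ := span_laminar a b f xbar hf hx hfeas
  have htop := tight_span_top a b f P hP xbar hxbar hfrac
  have hspanℒ : Submodule.span ℝ (chiCut a b '' {T | T ∈ ℒ}) = ⊤ := by
    apply le_antisymm le_top
    rw [← htop]
    rw [Submodule.span_le]
    rintro v ⟨S, hS, rfl⟩
    exact hℒspan S hS
  obtain ⟨bset, hbsub, hbspan, hbind⟩ :=
    exists_linearIndependent ℝ (chiCut a b '' {T | T ∈ ℒ})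
  rw [hspanℒ] at hbspan
  have hbfin : bset.Finite := (ℒ.finite_toSet.image _).subset hbsub
  haveI : Fintype ↑bset := hbfin.fintype
  set g : (ι → ℝ) → Finset V := fun v =>
    if h : ∃ T ∈ ℒ, chiCut a b T = v then h.choose else ∅ with hg_def
  have hg : ∀ v ∈ bset, g v ∈ ℒ ∧ chiCut a b (g v) = v := by
    intro v hv
    obtain ⟨T, hT, rfl⟩ := hbsub hv
    have hex : ∃ T' ∈ ℒ, chiCut a b T' = chiCut a b T := ⟨T, hT, rfl⟩
    rw [hg_def]
    simp only [dif_pos hex]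
    exact hex.choose_spec
  set L : Finset (Finset V) := bset.toFinset.image g with hL_def
  have hginj : Set.InjOn g bset.toFinset := by
    intro v1 h1 v2 h2 hgv
    simp only [Finset.mem_coe, Set.mem_toFinset] at h1 h2
    rw [← (hg v1 h1).2, ← (hg v2 h2).2, hgv]
  have hmemL : ∀ S ∈ L, ∃ v ∈ bset, g v = S ∧ chiCut a b S = v := by
    intro S hS
    rw [hL_def, Finset.mem_image] at hS
    obtain ⟨v, hv, rfl⟩ := hS
    rw [Set.mem_toFinset] at hv
    exact ⟨v, hv, rfl, (hg v hv).2⟩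
  have hLℒ : ∀ S ∈ L, S ∈ ℒ := by
    intro S hS
    obtain ⟨v, hv, rfl, -⟩ := hmemL S hS
    exact (hg v hv).1
  have hcard : L.card = Fintype.card ι := by
    rw [hL_def, Finset.card_image_of_injOn hginj]
    have := finrank_span_set_eq_card (s := bset) hbind
    rw [hbspan, finrank_top, Module.finrank_pi] at this
    omega
  have himg : chiCut a b '' {T | T ∈ L} = bset := by
    apply Set.eq_of_subset_of_subset
    · rintro v ⟨S, hS, rfl⟩
      obtain ⟨w, hw, -, hchi⟩ := hmemL S hS
      rw [hchi]; exact hw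
    · intro v hv
      refine ⟨g v, ?_, (hg v hv).2⟩
      show g v ∈ L
      rw [hL_def]
      exact Finset.mem_image.mpr ⟨v, Set.mem_toFinset.mpr hv, rfl⟩
  refine ⟨L, ?_, ?_, ?_, hcard, ?_, ?_⟩
  · intro S hS
    exact ⟨(hℒ1 S (hLℒ S hS)).1, (hℒ1 S (hLℒ S hS)).2.1⟩
  · intro S hS T hT
    exact hℒ2 S (hLℒ S hS) T (hLℒ T hT)
  · intro S hS
    exact (hℒ1 S (hLℒ S hS)).2.2
  · -- linear independence
    let e : {T // T ∈ L} → ↑bset := fun S =>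
      ⟨chiCut a b S.val, by
        obtain ⟨v, hv, -, hchi⟩ := hmemL S.val S.property
        rw [hchi]; exact hv⟩
    have heinj : Function.Injective e := by
      intro S1 S2 hee
      have hchi : chiCut a b S1.val = chiCut a b S2.val := congrArg Subtype.val hee
      obtain ⟨v1, hv1, hgv1, hc1⟩ := hmemL S1.val S1.property
      obtain ⟨v2, hv2, hgv2, hc2⟩ := hmemL S2.val S2.property
      apply Subtype.ext
      rw [← hgv1, ← hgv2]
      congr 1
      rw [← hc1, ← hc2, hchi]
    have : (fun S : {T // T ∈ L} => chiCut a b S.val) = Subtype.val ∘ e := rfl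
    rw [this]
    exact hbind.comp e heinj
  · -- uniqueness
    intro y hy
    set d : ι → ℝ := fun i => y i - xbar i with hd_def
    have horth : ∀ S ∈ L, ∑ i, d i * chiCut a b S i = 0 := by
      intro S hS
      have h1 : xCut a b y S = f S := hy S hS
      have h2 : xCut a b xbar S = f S := (hℒ1 S (hLℒ S hS)).2.2
      have : xCut a b y S - xCut a b xbar S = 0 := by rw [h1, h2]; ring
      rw [xCut_eq_sum, xCut_eq_sum, ← Finset.sum_sub_distrib] at this
      rw [← this]
      apply Finset.sum_congr rfl
      intro i _
      rw [hd_def]; ring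
    set φ : (ι → ℝ) →ₗ[ℝ] ℝ := ∑ i, d i • (LinearMap.proj i) with hφ_def
    have hφ : ∀ v : ι → ℝ, φ v = ∑ i, d i * v i := by
      intro v
      rw [hφ_def]
      simp [LinearMap.sum_apply, LinearMap.smul_apply, LinearMap.proj_apply, smul_eq_mul]
    have hker : Submodule.span ℝ bset ≤ LinearMap.ker φ := by
      rw [Submodule.span_le]
      intro v hv
      rw [SetLike.mem_coe, LinearMap.mem_ker, hφ]
      have : v = chiCut a b (g v) := ((hg v hv).2).symm
      rw [this]
      have hgvL : g v ∈ L := by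
        rw [hL_def]
        exact Finset.mem_image.mpr ⟨v, Set.mem_toFinset.mpr hv, rfl⟩
      exact horth (g v) hgvL
    rw [hbspan, top_le_iff] at hker
    have hφ0 : ∀ v, φ v = 0 := by
      intro v
      have : v ∈ LinearMap.ker φ := hker ▸ Submodule.mem_top
      exact LinearMap.mem_ker.mp this
    funext i
    have := hφ0 (Pi.single i 1)
    rw [hφ] at this
    simp only [Pi.single_apply, mul_ite, mul_one, mul_zero] at this
    rw [Finset.sum_ite_eq' Finset.univ i d] at this
    simp only [Finset.mem_univ, if_true] at this
    have : y i - xbar i = 0 := by rw [hd_def] at this; exact this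
    linarith
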